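/- For all real a, b > 0, ∫₀¹ (a·b)/(a·(1−t) + b·t) · 1/(π·√(t·(1−t))) dt = √(a·b). -/

import Mathlib

open MeasureTheory Real Set Filter Topology

section PW
variable {a b : ℝ}

noncomputable def pwF (a b t : ℝ) : ℝ :=
  (a * b / (a * (1 - t) + b * t)) * (1 / (Real.pi * Real.sqrt (t * (1 - t))))

lemma pw_denom_pos (ha : 0 < a) (hb : 0 < b) {t : ℝ} (h0 : 0 ≤ t) (h1 : t ≤ 1) :
    0 < a * (1 - t) + b * t := by
  rcases eq_or_lt_of_le h0 with rfl | h0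
  · simpa using ha
  rcases eq_or_lt_of_le h1 with rfl | h1
  · simpa using hb
  · have : 0 < a * (1 - t) := mul_pos ha (by linarith)
    nlinarith

lemma pw_ratio_le (ha : 0 < a) (hb : 0 < b) {t : ℝ} (h0 : 0 ≤ t) (h1 : t ≤ 1) :
    a * b / (a * (1 - t) + b * t) ≤ max a b := by
  rw [div_le_iff₀ (pw_denom_pos ha hb h0 h1)]
  rcases le_total a b with h | h
  · rw [max_eq_right h]
    nlinarith [mul_nonneg (mul_nonneg h0 hb.le) (sub_nonneg.mpr h)]
  · rw [max_eq_left h]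
    nlinarith [mul_nonneg (mul_nonneg (by linarith : (0:ℝ) ≤ 1 - t) ha.le) (sub_nonneg.mpr h)]

lemma pw_meas : Measurable (pwF a b) := by
  unfold pwF
  exact (measurable_const.div (by fun_prop)).mul
    (measurable_const.div ((measurable_const.mul ((measurable_id.mul (by fun_prop)).sqrt))))

lemma pw_int_left (ha : 0 < a) (hb : 0 < b) :
    IntervalIntegrable (pwF a b) volume 0 (1/2) := by
  rw [intervalIntegrable_iff_integrableOn_Ioc_of_le (by norm_num)]
  have hg : IntegrableOn (fun t : ℝ => (max a b * (Real.sqrt 2 / Real.pi)) * t ^ (-(1/2) : ℝ))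
      (Ioc 0 (1/2)) volume := by
    have := (intervalIntegral.intervalIntegrable_rpow' (r := -(1/2)) (by norm_num)
      (a := 0) (b := 1/2))
    rw [intervalIntegrable_iff_integrableOn_Ioc_of_le (by norm_num)] at this
    exact this.const_mul _
  refine hg.integrable.mono' (pw_meas.aestronglyMeasurable.restrict) ?_
  filter_upwards [ae_restrict_mem measurableSet_Ioc] with t ht
  obtain ⟨ht0, ht1⟩ := ht
  have h1t : (1:ℝ)/2 ≤ 1 - t := by linarith
  have hsp : 0 < Real.sqrt (t * (1 - t)) := Real.sqrt_pos.2 (by nlinarith)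
  have hDpos := pw_denom_pos ha hb ht0.le (by linarith : t ≤ 1)
  have hfpos : 0 ≤ pwF a b t := by unfold pwF; positivity
  rw [Real.norm_of_nonneg hfpos]
  unfold pwF
  have hst : Real.sqrt t / Real.sqrt 2 ≤ Real.sqrt (t * (1 - t)) := by
    rw [div_le_iff₀ (by positivity), ← Real.sqrt_mul (by positivity)]
    apply Real.sqrt_le_sqrt
    nlinarith [mul_nonneg ht0.le (by linarith : (0:ℝ) ≤ 1 - 2*t)]
  have hrp : t ^ (-(1/2) : ℝ) = (Real.sqrt t)⁻¹ := by
    rw [Real.rpow_neg ht0.le, Real.sqrt_eq_rpow]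
  rw [hrp]
  have hstp : 0 < Real.sqrt t := Real.sqrt_pos.2 ht0
  have h1 : a * b / (a * (1 - t) + b * t) ≤ max a b := pw_ratio_le ha hb ht0.le (by linarith)
  have h2 : 1 / (Real.pi * Real.sqrt (t * (1 - t))) ≤ Real.sqrt 2 / Real.pi * (Real.sqrt t)⁻¹ := by
    rw [div_mul_eq_mul_div, div_le_div_iff₀ (by positivity) Real.pi_pos, one_mul]
    calc Real.pi ≤ Real.pi * (Real.sqrt (t * (1-t)) * (Real.sqrt 2 / Real.sqrt t)) := by
          have : (1:ℝ) ≤ Real.sqrt (t * (1-t)) * (Real.sqrt 2 / Real.sqrt t) := by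
            rw [mul_div_assoc', le_div_iff₀ hstp, one_mul, mul_comm (Real.sqrt (t*(1-t)))]
            calc Real.sqrt t = Real.sqrt t / Real.sqrt 2 * Real.sqrt 2 := by
                  field_simp
              _ ≤ Real.sqrt (t*(1-t)) * Real.sqrt 2 :=
                  mul_le_mul_of_nonneg_right hst (Real.sqrt_nonneg 2)
              _ = Real.sqrt 2 * Real.sqrt (t*(1-t)) := mul_comm _ _
          nlinarith [Real.pi_pos]
      _ = Real.sqrt 2 * (Real.sqrt t)⁻¹ * (Real.pi * Real.sqrt (t * (1 - t))) := by
          field_simp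
  calc a * b / (a * (1 - t) + b * t) * (1 / (Real.pi * Real.sqrt (t * (1 - t))))
      ≤ max a b * (Real.sqrt 2 / Real.pi * (Real.sqrt t)⁻¹) := by
        apply mul_le_mul h1 h2 (by positivity) (le_max_of_le_left ha.le)
    _ = max a b * (Real.sqrt 2 / Real.pi) * (Real.sqrt t)⁻¹ := by ring

end PW

section PW2
variable {a b : ℝ}

lemma pw_symm : (fun x => pwF b a (1 - x)) = pwF a b := by
  funext x; unfold pwF
  rw [show b*(1-(1-x)) + a*(1-x) = a*(1-x) + b*x from by ring,
    show (1-x)*(1-(1-x)) = x*(1-x) from by ring, mul_comm b a]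

lemma pw_int (ha : 0 < a) (hb : 0 < b) : IntervalIntegrable (pwF a b) volume 0 1 := by
  refine (pw_int_left ha hb).trans ?_
  have h := ((pw_int_left hb ha).comp_sub_left 1).symm
  rw [pw_symm] at h
  norm_num at h
  exact h

noncomputable def pwG (a b t : ℝ) : ℝ :=
  (2 * Real.sqrt (a*b) / Real.pi) * Real.arctan (Real.sqrt (b*t/(a*(1-t))))

lemma pw_hasDeriv (ha : 0 < a) (hb : 0 < b) {t : ℝ} (ht : t ∈ Ioo (0:ℝ) 1) :
    HasDerivAt (pwG a b) (pwF a b t) t := by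
  obtain ⟨ht0, ht1⟩ := ht
  have h1t : (0:ℝ) < 1 - t := by linarith
  have hd : (0:ℝ) < a * (1 - t) := by positivity
  have hv0 : 0 < b * t / (a * (1 - t)) := by positivity
  -- derivative of v
  have hv : HasDerivAt (fun t => b * t / (a * (1 - t)))
      ((b * 1 * (a * (1 - t)) - b * t * (a * -1)) / (a * (1 - t)) ^ 2) t := by
    exact ((hasDerivAt_id t).const_mul b).div
      (((hasDerivAt_id t).const_sub 1).const_mul a) (ne_of_gt hd)
  have hs : HasDerivAt (fun t => Real.sqrt (b * t / (a * (1 - t))))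
      (1 / (2 * Real.sqrt (b*t/(a*(1-t)))) *
        ((b * 1 * (a * (1 - t)) - b * t * (a * -1)) / (a * (1 - t)) ^ 2)) t :=
    (Real.hasDerivAt_sqrt (ne_of_gt hv0)).comp t hv
  have harc : HasDerivAt (fun t => Real.arctan (Real.sqrt (b * t / (a * (1 - t)))))
      ((1 / (1 + (Real.sqrt (b*t/(a*(1-t))))^2)) *
        (1 / (2 * Real.sqrt (b*t/(a*(1-t)))) *
        ((b * 1 * (a * (1 - t)) - b * t * (a * -1)) / (a * (1 - t)) ^ 2))) t :=
    (Real.hasDerivAt_arctan _).comp t hs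
  have := harc.const_mul (2 * Real.sqrt (a*b) / Real.pi)
  convert this using 1
  · rfl
  · rfl
  · rfl
  -- algebra
  have hp2 : Real.sqrt a ^ 2 = a := Real.sq_sqrt ha.le
  have hq2 : Real.sqrt b ^ 2 = b := Real.sq_sqrt hb.le
  have hs2 : Real.sqrt t ^ 2 = t := Real.sq_sqrt ht0.le
  have hr2 : Real.sqrt (1-t) ^ 2 = 1 - t := Real.sq_sqrt h1t.le
  have hp : 0 < Real.sqrt a := Real.sqrt_pos.2 ha
  have hq : 0 < Real.sqrt b := Real.sqrt_pos.2 hb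
  have hs' : 0 < Real.sqrt t := Real.sqrt_pos.2 ht0
  have hr : 0 < Real.sqrt (1-t) := Real.sqrt_pos.2 h1t
  have hpq : Real.sqrt (a*b) = Real.sqrt a * Real.sqrt b := Real.sqrt_mul ha.le b
  have hsr : Real.sqrt (t*(1-t)) = Real.sqrt t * Real.sqrt (1-t) := Real.sqrt_mul ht0.le _
  have hu : Real.sqrt (b*t/(a*(1-t))) = (Real.sqrt b * Real.sqrt t)/(Real.sqrt a * Real.sqrt (1-t)) := by
    rw [Real.sqrt_div (by positivity), Real.sqrt_mul hb.le, Real.sqrt_mul ha.le]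
  have hsq : Real.sqrt (b*t/(a*(1-t)))^2 = b*t/(a*(1-t)) := Real.sq_sqrt hv0.le
  unfold pwF
  rw [hsq, hu, hpq, hsr]
  have hD : 0 < a * (1-t) + b * t := by positivity
  have hpi := Real.pi_pos
  set p := Real.sqrt a with hpdef
  set q := Real.sqrt b with hqdef
  set s := Real.sqrt t with hsdef
  set r := Real.sqrt (1-t) with hrdef
  have h1 : r^2 + s^2 = 1 := by rw [hr2, hs2]; ring
  field_simp
  rw [← hr2, ← hs2, ← hp2]
  linear_combination (-(p^2*r^2)) * h1

end PW2

section PW3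
variable {a b : ℝ}

lemma pw_tendsto_zero (ha : 0 < a) :
    Tendsto (pwG a b) (𝓝[>] (0:ℝ)) (𝓝 0) := by
  have hc : ContinuousAt (pwG a b) 0 := by
    unfold pwG
    apply ContinuousAt.mul continuousAt_const
    apply Real.continuous_arctan.continuousAt.comp
    apply (Real.continuous_sqrt.continuousAt).comp
    exact ContinuousAt.div (by fun_prop) (by fun_prop) (by norm_num [ha.ne'])
  have h0 : pwG a b 0 = 0 := by simp [pwG]
  have := hc.continuousWithinAt (s := Set.Ioi (0:ℝ))
  rw [ContinuousWithinAt, h0] at this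
  exact this

lemma pw_tendsto_one (ha : 0 < a) (hb : 0 < b) :
    Tendsto (pwG a b) (𝓝[<] (1:ℝ)) (𝓝 (Real.sqrt (a*b))) := by
  have h1 : Tendsto (fun t : ℝ => a*(1-t)) (𝓝[<] (1:ℝ)) (𝓝[>] 0) := by
    apply tendsto_nhdsWithin_of_tendsto_nhds_of_eventually_within
    · have hcont : Tendsto (fun t : ℝ => a*(1-t)) (𝓝 1) (𝓝 (a*(1-1))) :=
        (Continuous.tendsto (by fun_prop) 1)
      simpa using hcont.mono_left nhdsWithin_le_nhds
    · filter_upwards [self_mem_nhdsWithin] with t ht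
      have : t < 1 := ht
      have h1t : (0:ℝ) < 1 - t := by linarith
      exact Set.mem_Ioi.2 (by positivity)
  have h2 : Tendsto (fun t : ℝ => (a*(1-t))⁻¹) (𝓝[<] (1:ℝ)) atTop :=
    tendsto_inv_nhdsGT_zero.comp h1
  have h3 : Tendsto (fun t : ℝ => b*t) (𝓝[<] (1:ℝ)) (𝓝 b) := by
    have := (Continuous.tendsto (by fun_prop : Continuous (fun t : ℝ => b*t)) 1)
    simpa using this.mono_left nhdsWithin_le_nhds
  have hv : Tendsto (fun t : ℝ => b*t/(a*(1-t))) (𝓝[<] (1:ℝ)) atTop := by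
    simpa [div_eq_mul_inv] using h3.pos_mul_atTop hb h2
  have hsqrt : Tendsto Real.sqrt atTop atTop :=
    (tendsto_rpow_atTop (by norm_num : (0:ℝ) < 1/2)).congr
      (fun x => (Real.sqrt_eq_rpow x).symm)
  have harc : Tendsto (fun t : ℝ => Real.arctan (Real.sqrt (b*t/(a*(1-t)))))
      (𝓝[<] (1:ℝ)) (𝓝 (Real.pi/2)) :=
    (Real.tendsto_arctan_atTop.mono_right nhdsWithin_le_nhds).comp (hsqrt.comp hv)
  have := harc.const_mul (2 * Real.sqrt (a*b) / Real.pi)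
  have hval : 2 * Real.sqrt (a*b) / Real.pi * (Real.pi/2) = Real.sqrt (a*b) := by
    field_simp
  rw [hval] at this
  exact this

end PW3

/-- Scalar Pusz–Woronowicz identity: for `a, b > 0`,
`∫₀¹ ab/(a(1−t)+bt) dμ(t) = √(ab)` with `dμ(t) = dt/(π√(t(1−t)))`. -/
theorem puszWoronowicz_geometric_mean (a b : ℝ) (ha : 0 < a) (hb : 0 < b) :
    ∫ t in Set.Ioo (0 : ℝ) 1,
      (a * b / (a * (1 - t) + b * t)) * (1 / (Real.pi * Real.sqrt (t * (1 - t))))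
      = Real.sqrt (a * b) := by
  have key : ∫ t in (0:ℝ)..1, pwF a b t = Real.sqrt (a*b) - 0 :=
    intervalIntegral.integral_eq_sub_of_hasDerivAt_of_tendsto one_pos
      (fun x hx => pw_hasDeriv ha hb hx) (pw_int ha hb)
      (pw_tendsto_zero ha) (pw_tendsto_one ha hb)
  rw [intervalIntegral.integral_of_le zero_le_one, integral_Ioc_eq_integral_Ioo] at key
  rw [sub_zero] at key
  exact key
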